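/- Realizability preserves LP-Unif success for queries: for a fresh variable y, Φ ⊢ {A} ⇝* ∅ if and only if F(Φ) ⊢ {A[y]} ⇝* ∅, i.e. a query A succeeds by unification reduction under Φ exactly when the extended query A[y] succeeds under the transformed program F(Φ). -/

import Mathlib

namespace SRes

/-- First-order terms: variables and function symbols applied to lists of terms. -/
inductive Tm : Type where
  | var : ℕ → Tm
  | fn : ℕ → List Tm → Tm

/-- First-order substitutions. -/
abbrev Subst := ℕ → Tm

/-- Applying a substitution to a term. -/
def Tm.subst (σ : Subst) : Tm → Tm
  | .var x => σ x
  | .fn f ts => .fn f (ts.attach.map (fun t => Tm.subst σ t.1))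
decreasing_by
  have := List.sizeOf_lt_of_mem t.2
  simp only [Tm.fn.sizeOf_spec]
  omega

/-- The identity substitution. -/
def Subst.id : Subst := Tm.var

/-- Composition of substitutions: `(Subst.comp θ γ) x = θ(γ(x))`. -/
def Subst.comp (θ γ : Subst) : Subst := fun x => (γ x).subst θ

/-- Free variables of a term. -/
def Tm.fv : Tm → Finset ℕ
  | .var x => {x}
  | .fn _ ts => (ts.attach.map (fun t => Tm.fv t.1)).foldr (· ∪ ·) ∅
decreasing_by
  have := List.sizeOf_lt_of_mem t.2
  simp only [Tm.fn.sizeOf_spec]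
  omega

/-- Function symbols occurring in a term. -/
def Tm.fns : Tm → Finset ℕ
  | .var _ => ∅
  | .fn f ts => insert f ((ts.attach.map (fun t => Tm.fns t.1)).foldr (· ∪ ·) ∅)
decreasing_by
  have := List.sizeOf_lt_of_mem t.2
  simp only [Tm.fn.sizeOf_spec]
  omega

/-- Atomic formulas `P(t1,...,tn)`. -/
structure Atom : Type where
  pred : ℕ
  args : List Tm

def Atom.subst (σ : Subst) (A : Atom) : Atom := ⟨A.pred, A.args.map (Tm.subst σ)⟩

def Atom.fv (A : Atom) : Finset ℕ := (A.args.map Tm.fv).foldr (· ∪ ·) ∅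

def Atom.fns (A : Atom) : Finset ℕ := (A.args.map Tm.fns).foldr (· ∪ ·) ∅

/-- Renaming the variables of an atom. -/
def Atom.rename (ρ : ℕ → ℕ) (A : Atom) : Atom := A.subst (fun x => .var (ρ x))

/-- `A.ext t'` is `A[t']`: add `t'` as an extra last argument of `A`. -/
def Atom.ext (A : Atom) (t : Tm) : Atom := ⟨A.pred, A.args ++ [t]⟩

def listFV (As : List Atom) : Finset ℕ := (As.map Atom.fv).foldr (· ∪ ·) ∅

def listFns (As : List Atom) : Finset ℕ := (As.map Atom.fns).foldr (· ∪ ·) ∅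

/-- Free variables of a multiset of atoms. -/
def mFV (G : Multiset Atom) : Finset ℕ := (G.map Atom.fv).sup

/-- A logic program: a finite list of axioms `κ : ∀x̄. body ⇒ head`
(each axiom is implicitly universally closed). -/
abbrev Prog := List (ℕ × List Atom × Atom)

def progFns (Φ : Prog) : Finset ℕ :=
  (Φ.map (fun r => r.2.2.fns ∪ listFns r.2.1)).foldr (· ∪ ·) ∅

/-! ### Proof terms (de Bruijn representation for bound proof variables) -/

inductive Pf : Type where
  | const : ℕ → Pf           -- proof-term constants κ
  | bvar : ℕ → Pf            -- proof-term variables a (de Bruijn)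
  | lam : Pf → Pf            -- λa.e
  | app : Pf → Pf → Pf       -- e e'

/-- Lift de Bruijn indices `≥ c` by `d`. -/
def Pf.lift (c d : ℕ) : Pf → Pf
  | .const k => .const k
  | .bvar i => if i < c then .bvar i else .bvar (i + d)
  | .lam p => .lam (p.lift (c+1) d)
  | .app p q => .app (p.lift c d) (q.lift c d)

/-- Substitute `q` for de Bruijn index `k` in a proof term. -/
def Pf.subst (k : ℕ) (q : Pf) : Pf → Pf
  | .const c => .const c
  | .bvar i => if i < k then .bvar i else if i = k then q.lift 0 k else .bvar (i - 1)
  | .lam p => .lam (Pf.subst (k+1) q p)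
  | .app p p' => .app (Pf.subst k q p) (Pf.subst k q p')

/-- Beta-reduction on proof terms: congruence closure of `(λa.p) p' →β [p'/a]p`. -/
inductive Beta : Pf → Pf → Prop where
  | beta (p q : Pf) : Beta (.app (.lam p) q) (p.subst 0 q)
  | appL {p p' q : Pf} : Beta p p' → Beta (.app p q) (.app p' q)
  | appR {p q q' : Pf} : Beta q q' → Beta (.app p q) (.app p q')
  | lam {p p' : Pf} : Beta p p' → Beta (.lam p) (.lam p')

/-- A proof term is strongly normalizing if every β-reduction sequence from it is finite. -/
def Pf.SN (p : Pf) : Prop := Acc (fun a b => Beta b a) p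

/-- β-normal proof terms. -/
def Pf.Normal (p : Pf) : Prop := ∀ q, ¬ Beta p q

/-- First-order proof terms: built from constants and variables by application only. -/
inductive Pf.FirstOrder : Pf → Prop where
  | const (κ : ℕ) : Pf.FirstOrder (.const κ)
  | bvar (a : ℕ) : Pf.FirstOrder (.bvar a)
  | app {p q : Pf} : Pf.FirstOrder p → Pf.FirstOrder q → Pf.FirstOrder (.app p q)

/-- `Pf.lams k p` is `λa1...λak. p`. -/
def Pf.lams : ℕ → Pf → Pf
  | 0, p => p
  | n+1, p => .lam (Pf.lams n p)

/-- Apply a proof term to a list of proof terms, left associated. -/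
def Pf.apps (p : Pf) : List Pf → Pf
  | [] => p
  | q :: qs => Pf.apps (.app p q) qs

/-- The proof term `λā.λb̄.(e2 b̄)(e1 ā)` produced by the cut rule
(`n` is the length of `ā`, `m` the length of `b̄`). -/
def cutTerm (n m : ℕ) (e₁ e₂ : Pf) : Pf :=
  Pf.lams (n + m) <|
    .app (Pf.apps (e₂.lift 0 (n+m)) ((List.range m).map (fun j => Pf.bvar (m - 1 - j))))
         (Pf.apps (e₁.lift 0 (n+m)) ((List.range n).map (fun j => Pf.bvar (n + m - 1 - j))))

/-! ### Horn formulas as types -/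

/-- Horn formulas `A1,...,An ⇒ B`, either unquantified (`horn`)
or universally closed over all their free term variables (`all`). -/
inductive Formula : Type where
  | horn : List Atom → Atom → Formula
  | all : List Atom → Atom → Formula

/-- The Horn-formulas-as-types typing judgment `e : F` relative to a program `Φ`. -/
inductive Derives (Φ : Prog) : Pf → Formula → Prop where
  | ax {κ : ℕ} {body : List Atom} {head : Atom} :
      (κ, body, head) ∈ Φ → Derives Φ (.const κ) (.all body head)
  | gen {e : Pf} {body : List Atom} {head : Atom} :
      Derives Φ e (.horn body head) → Derives Φ e (.all body head)
  | inst {e : Pf} {body : List Atom} {head : Atom} (σ : Subst) :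
      Derives Φ e (.all body head) →
      Derives Φ e (.horn (body.map (Atom.subst σ)) (head.subst σ))
  | cut {e₁ e₂ : Pf} {As Bs : List Atom} {D C : Atom} :
      Derives Φ e₁ (.horn As D) → Derives Φ e₂ (.horn (Bs ++ [D]) C) →
      Derives Φ (cutTerm As.length Bs.length e₁ e₂) (.horn (As ++ Bs) C)

/-! ### Reductions -/

def Unifies (γ : Subst) (A B : Atom) : Prop := A.subst γ = B.subst γ

/-- `γ` is a most general unifier of `A` and `B`. -/
def IsMGU (γ : Subst) (A B : Atom) : Prop :=
  Unifies γ A B ∧ ∀ δ, Unifies δ A B → ∃ θ, δ = Subst.comp θ γ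

/-- `(body, head)` is a freshly renamed copy of the axiom `κ` of `Φ`,
whose variables do not occur in the goal multiset `G`. -/
def FreshRuleFor (Φ : Prog) (κ : ℕ) (G : Multiset Atom)
    (body : List Atom) (head : Atom) : Prop :=
  ∃ (body₀ : List Atom) (head₀ : Atom) (ρ : ℕ → ℕ),
    (κ, body₀, head₀) ∈ Φ ∧ Function.Injective ρ ∧
    body = body₀.map (Atom.rename ρ) ∧ head = head₀.rename ρ ∧
    Disjoint (listFV body ∪ head.fv) (mFV G)

/-- Term-matching (LP-TM) reduction step via axiom `κ`:
replace `Ai = σC` by `σB1,...,σBm`. -/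
def TMStep (Φ : Prog) (κ : ℕ) (G G' : Multiset Atom) : Prop :=
  ∃ (body : List Atom) (head : Atom) (σ : Subst) (rest : Multiset Atom),
    (κ, body, head) ∈ Φ ∧ G = (head.subst σ) ::ₘ rest ∧
    G' = ↑(body.map (Atom.subst σ)) + rest

def TMred (Φ : Prog) (G G' : Multiset Atom) : Prop := ∃ κ, TMStep Φ κ G G'

/-- `G` is in term-matching normal form. -/
def TMNF (Φ : Prog) (G : Multiset Atom) : Prop := ∀ G', ¬ TMred Φ G G'

/-- `Φ` is productive: every term-matching reduction sequence is finite. -/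
def Productive (Φ : Prog) : Prop := ∀ G, Acc (fun a b => TMred Φ b a) G

/-- Unification (LP-Unif) reduction step via axiom `κ` with most general unifier `γ`. -/
def UnifStepL (Φ : Prog) (κ : ℕ) (γ : Subst) (G G' : Multiset Atom) : Prop :=
  ∃ (A : Atom) (rest : Multiset Atom) (body : List Atom) (head : Atom),
    G = A ::ₘ rest ∧ FreshRuleFor Φ κ G body head ∧ IsMGU γ head A ∧
    G' = ↑(body.map (Atom.subst γ)) + rest.map (Atom.subst γ)

/-- Substitutional reduction step via axiom `κ` with most general unifier `γ`. -/
def SubStepL (Φ : Prog) (κ : ℕ) (γ : Subst) (G G' : Multiset Atom) : Prop :=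
  ∃ (A : Atom) (rest : Multiset Atom) (body : List Atom) (head : Atom),
    G = A ::ₘ rest ∧ FreshRuleFor Φ κ G body head ∧ IsMGU γ head A ∧
    G' = G.map (Atom.subst γ)

/-- Stateful LP-Unif reduction on pairs (goal multiset, accumulated substitution). -/
def unifR (Φ : Prog) (p q : Multiset Atom × Subst) : Prop :=
  ∃ κ γ, UnifStepL Φ κ γ p.1 q.1 ∧ q.2 = Subst.comp γ p.2

/-- Stateful LP-Struct reduction `→^μ·↪^1`: term-matching reduce to `→`-normal form,
then perform at most one substitutional step. -/
def structR (Φ : Prog) (p q : Multiset Atom × Subst) : Prop :=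
  ∃ G', Relation.ReflTransGen (TMred Φ) p.1 G' ∧ TMNF Φ G' ∧
    ((q.1 = G' ∧ q.2 = p.2) ∨ ∃ κ γ, SubStepL Φ κ γ G' q.1 ∧ q.2 = Subst.comp γ p.2)

/-- A multiset of queries succeeds by LP-Unif reduction. -/
def UnifSucc (Φ : Prog) (G : Multiset Atom) : Prop :=
  ∃ γ, Relation.ReflTransGen (unifR Φ) (G, Subst.id) (0, γ)

/-- A multiset of queries succeeds by LP-Struct reduction. -/
def StructSucc (Φ : Prog) (G : Multiset Atom) : Prop :=
  ∃ γ, Relation.ReflTransGen (structR Φ) (G, Subst.id) (0, γ)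

/-- `Φ` is non-overlapping: heads of distinct axioms have no common instance. -/
def NonOverlapping (Φ : Prog) : Prop :=
  ∀ κ body head κ' body' head', (κ, body, head) ∈ Φ → (κ', body', head') ∈ Φ → κ ≠ κ' →
    ∀ σ δ : Subst, head.subst σ ≠ head'.subst δ

/-! ### Realizability transformation -/

def ruleFV (body : List Atom) (head : Atom) : Finset ℕ := listFV body ∪ head.fv

/-- `extBody [A1,...,Am] [y1,...,ym] = [A1[y1],...,Am[ym]]`. -/
def extBody (As : List Atom) (ys : List ℕ) : List Atom :=
  List.zipWith (fun A y => A.ext (Tm.var y)) As ys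

/-- Realizability transformation of a single axiom `κ : ∀x̄. A1,...,Am ⇒ B`
into `κ : ∀x̄∀ȳ. A1[y1],...,Am[ym] ⇒ B[f_κ(y1,...,ym)]` with fresh distinct `ȳ`. -/
def transRule (fsym : ℕ → ℕ) (κ : ℕ) (body : List Atom) (head : Atom) : List Atom × Atom :=
  let N := (ruleFV body head).sup id + 1
  let ys := (List.range body.length).map (fun i => N + i)
  (extBody body ys, head.ext (.fn (fsym κ) (ys.map Tm.var)))

/-- The realizability transformation `F(Φ)`. -/
def transProg (fsym : ℕ → ℕ) (Φ : Prog) : Prog :=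
  Φ.map (fun r => (r.1, transRule fsym r.1 r.2.1 r.2.2))

/-- `fsym` assigns a fresh function symbol `f_κ` to each proof-term constant `κ`. -/
def FreshSyms (fsym : ℕ → ℕ) (Φ : Prog) : Prop :=
  Function.Injective fsym ∧ ∀ κ, fsym κ ∉ progFns Φ

/-- The representation `⟦·⟧_φ` of first-order normal proof terms as first-order terms:
`⟦a⟧_φ = φ(a)` and `⟦κ p1 ... pn⟧_φ = f_κ(⟦p1⟧_φ,...,⟦pn⟧_φ)`. -/
inductive PfRep (fsym : ℕ → ℕ) (φ : ℕ → Tm) : Pf → Tm → Prop where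
  | bvar (a : ℕ) : PfRep fsym φ (.bvar a) (φ a)
  | app (κ : ℕ) (ps : List Pf) (ts : List Tm) (hlen : ps.length = ts.length)
      (h : ∀ pt ∈ ps.zip ts, PfRep fsym φ pt.1 pt.2) :
      PfRep fsym φ (Pf.apps (.const κ) ps) (.fn (fsym κ) ts)

/-- The map `[ȳ/ā]` sending the bound proof variables `a1,...,ak` (de Bruijn) of
`λa1...ak.n` to the first-order variables `y1,...,yk`. -/
def mkPhi (ys : List ℕ) : ℕ → Tm := fun j => Tm.var (ys.getD (ys.length - 1 - j) 0)

-- ### development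
@[simp] theorem Tm.subst_var (σ : Subst) (x : ℕ) : (Tm.var x).subst σ = σ x := by
  simp [Tm.subst]

@[simp] theorem Tm.subst_fn (σ : Subst) (f : ℕ) (ts : List Tm) :
    (Tm.fn f ts).subst σ = .fn f (ts.map (Tm.subst σ)) := by
  rw [Tm.subst]; congr 1; exact List.attach_map_val (l := ts) (f := Tm.subst σ)

@[simp] theorem Tm.fv_var (x : ℕ) : (Tm.var x).fv = {x} := by simp [Tm.fv]

@[simp] theorem Tm.fv_fn (f : ℕ) (ts : List Tm) :
    (Tm.fn f ts).fv = (ts.map Tm.fv).foldr (· ∪ ·) ∅ := by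
  rw [Tm.fv]; congr 1; exact List.attach_map_val (l := ts) (f := Tm.fv)

theorem Tm.inductionOn {P : Tm → Prop} (hv : ∀ x, P (.var x))
    (hf : ∀ f ts, (∀ t ∈ ts, P t) → P (.fn f ts)) : ∀ t, P t := by
  have H : ∀ n t, sizeOf t ≤ n → P t := by
    intro n
    induction n with
    | zero => intro t ht; cases t <;> simp_all
    | succ n ih =>
      intro t ht
      cases t with
      | var x => exact hv x
      | fn f ts =>
        refine hf f ts (fun t htm => ih t ?_)
        have := List.sizeOf_lt_of_mem htm
        simp only [Tm.fn.sizeOf_spec] at ht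
        omega
  exact fun t => H (sizeOf t) t le_rfl

theorem mem_foldr_union {x : ℕ} : ∀ {l : List (Finset ℕ)},
    x ∈ l.foldr (· ∪ ·) ∅ ↔ ∃ s ∈ l, x ∈ s := by
  intro l; induction l with
  | nil => simp
  | cons a l ih => simp [ih]

theorem Tm.mem_fv_fn {v f ts} : v ∈ (Tm.fn f ts).fv ↔ ∃ t ∈ ts, v ∈ Tm.fv t := by
  rw [Tm.fv_fn, mem_foldr_union]; simp

theorem Tm.subst_subst (θ γ : Subst) : ∀ t : Tm,
    (t.subst γ).subst θ = t.subst (Subst.comp θ γ) := by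
  refine Tm.inductionOn (fun x => by simp [Subst.comp]) ?_
  intro f ts ih
  simp only [Tm.subst_fn, List.map_map]
  congr 1
  exact List.map_congr_left fun t ht => ih t ht

theorem Subst.comp_assoc (θ γ σ : Subst) :
    Subst.comp (Subst.comp θ γ) σ = Subst.comp θ (Subst.comp γ σ) := by
  funext x; simp [Subst.comp, Tm.subst_subst]

@[simp] theorem Subst.comp_id (σ : Subst) : Subst.comp σ Subst.id = σ := by
  funext x; simp [Subst.comp, Subst.id]

theorem Tm.subst_congr {σ σ' : Subst} : ∀ {t : Tm},
    (∀ v ∈ t.fv, σ v = σ' v) → t.subst σ = t.subst σ' := by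
  intro t
  induction t using Tm.inductionOn with
  | hv x => intro h; simpa using h x (by simp)
  | hf f ts ih =>
    intro h
    simp only [Tm.subst_fn]
    congr 1
    refine List.map_congr_left fun t ht => ih t ht fun v hv => h v ?_
    exact Tm.mem_fv_fn.2 ⟨t, ht, hv⟩

theorem Tm.mem_fv_subst {σ : Subst} {v : ℕ} : ∀ {t : Tm},
    v ∈ (t.subst σ).fv → ∃ u ∈ t.fv, v ∈ (σ u).fv := by
  intro t
  induction t using Tm.inductionOn with
  | hv x => intro h; exact ⟨x, by simp, by simpa using h⟩
  | hf f ts ih =>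
    intro h
    simp only [Tm.subst_fn, Tm.mem_fv_fn, List.mem_map] at h
    obtain ⟨-, ⟨t, ht, rfl⟩, hv⟩ := h
    obtain ⟨u, hu, hvu⟩ := ih t ht hv
    exact ⟨u, Tm.mem_fv_fn.2 ⟨t, ht, hu⟩, hvu⟩

def Tm.size : Tm → ℕ
  | .var _ => 1
  | .fn _ ts => 1 + (ts.attach.map (fun t => Tm.size t.1)).sum
decreasing_by
  have := List.sizeOf_lt_of_mem t.2
  simp only [Tm.fn.sizeOf_spec]
  omega

@[simp] theorem Tm.size_var (x : ℕ) : (Tm.var x).size = 1 := by simp [Tm.size]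

@[simp] theorem Tm.size_fn (f : ℕ) (ts : List Tm) :
    (Tm.fn f ts).size = 1 + (ts.map Tm.size).sum := by
  rw [Tm.size]; congr 2; exact List.attach_map_val (l := ts) (f := Tm.size)

theorem Tm.size_pos : ∀ t : Tm, 0 < t.size := by
  intro t; cases t <;> simp

theorem Tm.size_subst_le {σ : Subst} {x : ℕ} : ∀ {t : Tm},
    x ∈ t.fv → (σ x).size ≤ (t.subst σ).size := by
  intro t
  induction t using Tm.inductionOn with
  | hv y => intro h; simp at h; subst h; simp
  | hf f ts ih =>
    intro h
    rw [Tm.mem_fv_fn] at h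
    obtain ⟨t, ht, hx⟩ := h
    have h1 : (σ x).size ≤ (t.subst σ).size := ih t ht hx
    have h2 : (t.subst σ).size ≤ ((ts.map (Tm.subst σ)).map Tm.size).sum := by
      refine List.single_le_sum (fun y _ => Nat.zero_le y) _ ?_
      exact List.mem_map.2 ⟨t.subst σ, List.mem_map.2 ⟨t, ht, rfl⟩, rfl⟩
    simp only [Tm.subst_fn, Tm.size_fn]
    omega

theorem Tm.size_subst_lt {σ : Subst} {x : ℕ} {t : Tm}
    (hx : x ∈ t.fv) (hne : t ≠ .var x) : (σ x).size < (t.subst σ).size := by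
  cases t with
  | var y => simp at hx; subst hx; exact absurd rfl hne
  | fn f ts =>
    rw [Tm.mem_fv_fn] at hx
    obtain ⟨u, hu, hxu⟩ := hx
    have h1 : (σ x).size ≤ (u.subst σ).size := Tm.size_subst_le hxu
    have h2 : (u.subst σ).size ≤ ((ts.map (Tm.subst σ)).map Tm.size).sum := by
      refine List.single_le_sum (fun y _ => Nat.zero_le y) _ ?_
      exact List.mem_map.2 ⟨u.subst σ, List.mem_map.2 ⟨u, hu, rfl⟩, rfl⟩
    simp only [Tm.subst_fn, Tm.size_fn]
    omega
-- ### Unification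
def UE (δ : Subst) (E : List (Tm × Tm)) : Prop := ∀ p ∈ E, p.1.subst δ = p.2.subst δ

def varsE (E : List (Tm × Tm)) : Finset ℕ :=
  (E.map (fun p => p.1.fv ∪ p.2.fv)).foldr (· ∪ ·) ∅

theorem mem_varsE {v : ℕ} {E : List (Tm × Tm)} :
    v ∈ varsE E ↔ ∃ p ∈ E, v ∈ p.1.fv ∨ v ∈ p.2.fv := by
  rw [varsE, mem_foldr_union]
  constructor
  · rintro ⟨s, hs, hv⟩
    obtain ⟨p, hp, rfl⟩ := List.mem_map.1 hs
    exact ⟨p, hp, by simpa using hv⟩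
  · rintro ⟨p, hp, hv⟩
    exact ⟨_, List.mem_map.2 ⟨p, hp, rfl⟩, by simpa using hv⟩

def psize (E : List (Tm × Tm)) : ℕ := (E.map (fun p => p.1.size + p.2.size)).sum

def IsSMgu (γ : Subst) (E : List (Tm × Tm)) : Prop :=
  UE γ E ∧ ∀ δ, UE δ E → δ = Subst.comp δ γ

/-- single variable substitution -/
def sv (x : ℕ) (t : Tm) : Subst := fun v => if v = x then t else .var v

theorem sv_self (x t) : sv x t x = t := by simp [sv]

theorem Tm.subst_id : ∀ t : Tm, t.subst Subst.id = t := by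
  refine Tm.inductionOn (fun x => by simp [Subst.id]) ?_
  intro f ts ih
  simp only [Tm.subst_fn]
  rw [List.map_congr_left (fun t ht => ih t ht)]
  simp

theorem subst_sv_eq_self {x : ℕ} {t u : Tm} (hx : x ∉ u.fv) : u.subst (sv x t) = u := by
  have h : u.subst (sv x t) = u.subst Subst.id := by
    refine Tm.subst_congr fun v hv => ?_
    have : v ≠ x := fun h => hx (h ▸ hv)
    simp [sv, this, Subst.id]
  rw [h, Tm.subst_id]

theorem delta_eq_comp_sv {δ : Subst} {x : ℕ} {t : Tm} (h : δ x = t.subst δ) :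
    δ = Subst.comp δ (sv x t) := by
  funext v
  by_cases hv : v = x
  · subst hv; simp [Subst.comp, sv, h]
  · simp [Subst.comp, sv, hv]

theorem UE_swap {δ : Subst} {s t : Tm} {r : List (Tm × Tm)} :
    UE δ ((s, t) :: r) ↔ UE δ ((t, s) :: r) := by
  constructor <;> intro h p hp <;> rcases List.mem_cons.1 hp with h' | h'
  · subst h'; exact (h (s, t) (by simp)).symm
  · exact h p (by simp [h'])
  · subst h'; exact (h (t, s) (by simp)).symm
  · exact h p (by simp [h'])

theorem IsSMgu_swap {γ : Subst} {s t : Tm} {r : List (Tm × Tm)} :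
    IsSMgu γ ((s, t) :: r) → IsSMgu γ ((t, s) :: r) := by
  rintro ⟨h1, h2⟩
  exact ⟨UE_swap.1 h1, fun δ hδ => h2 δ (UE_swap.2 hδ)⟩

theorem elim_mgu {x : ℕ} {t : Tm} {rest : List (Tm × Tm)} (hx : x ∉ t.fv) {γ' : Subst}
    (h : IsSMgu γ' (rest.map (fun p => (p.1.subst (sv x t), p.2.subst (sv x t))))) :
    IsSMgu (Subst.comp γ' (sv x t)) ((Tm.var x, t) :: rest) := by
  obtain ⟨hu, hmax⟩ := h
  constructor
  · intro p hp
    rcases List.mem_cons.1 hp with h' | h'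
    · subst h'
      show (Tm.var x).subst (Subst.comp γ' (sv x t)) = t.subst (Subst.comp γ' (sv x t))
      rw [← Tm.subst_subst, ← Tm.subst_subst, Tm.subst_var, sv_self, subst_sv_eq_self hx]
    · have := hu (p.1.subst (sv x t), p.2.subst (sv x t)) (List.mem_map.2 ⟨p, h', rfl⟩)
      simpa [← Tm.subst_subst] using this
  · intro δ hδ
    have hhead : δ x = t.subst δ := by simpa using hδ (Tm.var x, t) (by simp)
    have hds : δ = Subst.comp δ (sv x t) := delta_eq_comp_sv hhead
    have hδ' : UE δ (rest.map (fun p => (p.1.subst (sv x t), p.2.subst (sv x t)))) := by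
      intro p hp
      obtain ⟨q, hq, rfl⟩ := List.mem_map.1 hp
      have := hδ q (by simp [hq])
      simp only [Tm.subst_subst, ← hds]
      exact this
    have hthis := hmax δ hδ'
    calc δ = Subst.comp δ (sv x t) := hds
      _ = Subst.comp (Subst.comp δ γ') (sv x t) := by rw [← hthis]
      _ = Subst.comp δ (Subst.comp γ' (sv x t)) := Subst.comp_assoc _ _ _

theorem zip_forall_of_map_eq {δ : Subst} : ∀ {l1 l2 : List Tm},
    l1.map (Tm.subst δ) = l2.map (Tm.subst δ) →
    ∀ p ∈ l1.zip l2, p.1.subst δ = p.2.subst δ := by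
  intro l1
  induction l1 with
  | nil => intro l2 h p hp; simp at hp
  | cons a l ih =>
    intro l2 h p hp
    cases l2 with
    | nil => simp at h
    | cons b l2 =>
      simp only [List.map_cons, List.cons.injEq] at h
      rcases List.mem_cons.1 hp with h' | h'
      · subst h'; exact h.1
      · exact ih h.2 p h'

theorem map_eq_of_zip {δ : Subst} : ∀ {l1 l2 : List Tm}, l1.length = l2.length →
    (∀ p ∈ l1.zip l2, p.1.subst δ = p.2.subst δ) →
    l1.map (Tm.subst δ) = l2.map (Tm.subst δ) := by
  intro l1
  induction l1 with
  | nil => intro l2 h _; cases l2 with | nil => rfl | cons b l2 => simp at h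
  | cons a l ih =>
    intro l2 hlen h
    cases l2 with
    | nil => simp at hlen
    | cons b l2 =>
      simp only [List.map_cons]
      rw [h (a, b) (by simp), ih (by simpa using hlen) (fun p hp => h p (by simp [hp]))]

theorem zip_sum_le : ∀ (l1 l2 : List Tm),
    ((l1.zip l2).map (fun p => p.1.size + p.2.size)).sum ≤
      (l1.map Tm.size).sum + (l2.map Tm.size).sum := by
  intro l1
  induction l1 with
  | nil => intro l2; simp
  | cons a l ih =>
    intro l2
    cases l2 with
    | nil => simp
    | cons b l2 =>
      simp only [List.zip_cons_cons, List.map_cons, List.sum_cons]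
      have := ih l2
      omega

theorem mgu_exists_aux : ∀ k E, (varsE E).card ≤ k → ∀ δ, UE δ E → ∃ γ, IsSMgu γ E := by
  intro k
  induction k using Nat.strong_induction_on with
  | _ k IHk =>
  suffices H : ∀ n E, (varsE E).card ≤ k → psize E ≤ n → ∀ δ, UE δ E → ∃ γ, IsSMgu γ E by
    intro E hk δ hδ; exact H (psize E) E hk le_rfl δ hδ
  intro n
  induction n with
  | zero =>
    intro E hk hn δ hδ
    have : E = [] := by
      cases E with
      | nil => rfl
      | cons p E =>
        exfalso
        have h1 := Tm.size_pos p.1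
        have h2 := Tm.size_pos p.2
        simp [psize] at hn
        omega
    subst this
    exact ⟨Subst.id, fun p hp => by simp at hp, fun δ' _ => by funext v; simp [Subst.comp, Subst.id]⟩
  | succ n IHn =>
    intro E hk hn δ hδ
    cases E with
    | nil => exact ⟨Subst.id, fun p hp => by simp at hp, fun δ' _ => by funext v; simp [Subst.comp, Subst.id]⟩
    | cons p rest =>
      obtain ⟨s, t⟩ := p
      have hst : s.subst δ = t.subst δ := hδ (s, t) (by simp)
      have hrest : UE δ rest := fun q hq => hδ q (by simp [hq])
      have hvsub : varsE rest ⊆ varsE ((s, t) :: rest) := by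
        intro v hv
        rw [mem_varsE] at hv ⊢
        obtain ⟨q, hq, h⟩ := hv
        exact ⟨q, by simp [hq], h⟩
      have hpsz : psize rest + s.size + t.size = psize ((s, t) :: rest) := by
        simp [psize]; ring
      -- the variable elimination case, abstracted over orientation
      have elimcase : ∀ x u, x ∉ u.fv → u.fv ⊆ varsE ((s, t) :: rest) →
          x ∈ varsE ((s, t) :: rest) → δ x = u.subst δ →
          ∃ γ, IsSMgu γ ((Tm.var x, u) :: rest) := by
        intro x u hxu hufv hxE hdx
        set E' := rest.map (fun p => (p.1.subst (sv x u), p.2.subst (sv x u))) with hE'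
        have hδE' : UE δ E' := by
          intro q hq
          obtain ⟨q₀, hq₀, rfl⟩ := List.mem_map.1 hq
          have hds : δ = Subst.comp δ (sv x u) := delta_eq_comp_sv hdx
          have := hrest q₀ hq₀
          simp only [Tm.subst_subst, ← hds]
          exact this
        have hsub : varsE E' ⊆ (varsE ((s, t) :: rest)).erase x := by
          intro v hv
          rw [mem_varsE] at hv
          obtain ⟨q, hq, h⟩ := hv
          obtain ⟨q₀, hq₀, rfl⟩ := List.mem_map.1 hq
          have : ∃ w, (w ∈ q₀.1.fv ∨ w ∈ q₀.2.fv) ∧ v ∈ ((sv x u) w).fv := by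
            rcases h with h | h
            · obtain ⟨w, hw, hvw⟩ := Tm.mem_fv_subst h; exact ⟨w, Or.inl hw, hvw⟩
            · obtain ⟨w, hw, hvw⟩ := Tm.mem_fv_subst h; exact ⟨w, Or.inr hw, hvw⟩
          obtain ⟨w, hw, hvw⟩ := this
          by_cases hwx : w = x
          · rw [hwx, sv_self] at hvw
            have hvx : v ≠ x := fun h => hxu (h ▸ hvw)
            exact Finset.mem_erase.2 ⟨hvx, hufv hvw⟩
          · simp [sv, hwx] at hvw
            subst hvw
            refine Finset.mem_erase.2 ⟨hwx, ?_⟩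
            rw [mem_varsE]
            exact ⟨q₀, by simp [hq₀], hw⟩
        have hcard : (varsE E').card < k := by
          have h1 : (varsE E').card ≤ ((varsE ((s, t) :: rest)).erase x).card :=
            Finset.card_le_card hsub
          have h2 : ((varsE ((s, t) :: rest)).erase x).card <
              (varsE ((s, t) :: rest)).card := Finset.card_erase_lt_of_mem hxE
          omega
        obtain ⟨γ', hγ'⟩ := IHk (varsE E').card hcard E' le_rfl δ hδE'
        exact ⟨_, elim_mgu hxu hγ'⟩
      have hfvs : s.fv ⊆ varsE ((s, t) :: rest) := by
        intro v hv; rw [mem_varsE]; exact ⟨(s, t), by simp, Or.inl hv⟩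
      have hfvt : t.fv ⊆ varsE ((s, t) :: rest) := by
        intro v hv; rw [mem_varsE]; exact ⟨(s, t), by simp, Or.inr hv⟩
      cases s with
      | var x =>
        by_cases hocc : x ∈ t.fv
        · by_cases heq : t = .var x
          · -- drop the trivial pair
            subst heq
            simp only [Tm.size_var] at hpsz
            obtain ⟨γ, hγ1, hγ2⟩ := IHn rest (le_trans (Finset.card_le_card hvsub) hk)
              (by omega) δ hrest
            refine ⟨γ, ?_, ?_⟩
            · intro q hq
              rcases List.mem_cons.1 hq with h' | h'
              · subst h'; rfl
              · exact hγ1 q h'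
            · intro δ' hδ'
              exact hγ2 δ' (fun q hq => hδ' q (by simp [hq]))
          · -- occurs check failure: contradiction
            exfalso
            have hlt := Tm.size_subst_lt (σ := δ) hocc heq
            rw [← hst] at hlt
            simp only [Tm.subst_var] at hlt
            omega
        · exact elimcase x t hocc hfvt (hfvs (by simp)) (by simpa using hst)
      | fn f ss =>
        cases t with
        | var x =>
          by_cases hocc : x ∈ (Tm.fn f ss).fv
          · exfalso
            have hne : Tm.fn f ss ≠ .var x := by simp
            have hlt := Tm.size_subst_lt (σ := δ) hocc hne
            rw [hst] at hlt
            simp only [Tm.subst_var] at hlt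
            omega
          · obtain ⟨γ, hγ⟩ := elimcase x (Tm.fn f ss) hocc hfvs (hfvt (by simp))
              (by simpa using hst.symm)
            exact ⟨γ, IsSMgu_swap hγ⟩
        | fn g ts =>
          simp only [Tm.subst_fn, Tm.fn.injEq] at hst
          obtain ⟨rfl, hmaps⟩ := hst
          have hlen : ss.length = ts.length := by
            have := congrArg List.length hmaps; simpa using this
          set E'' := ss.zip ts ++ rest with hE''
          have hδE'' : UE δ E'' := by
            intro q hq
            rcases List.mem_append.1 hq with h' | h'
            · exact zip_forall_of_map_eq hmaps q h'
            · exact hrest q h'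
          have hvsub'' : varsE E'' ⊆ varsE ((Tm.fn f ss, Tm.fn f ts) :: rest) := by
            intro v hv
            rw [mem_varsE] at hv ⊢
            obtain ⟨q, hq, h⟩ := hv
            rcases List.mem_append.1 hq with h' | h'
            · obtain ⟨h1, h2⟩ := List.of_mem_zip h'
              refine ⟨(Tm.fn f ss, Tm.fn f ts), by simp, ?_⟩
              rcases h with h | h
              · exact Or.inl (Tm.mem_fv_fn.2 ⟨q.1, h1, h⟩)
              · exact Or.inr (Tm.mem_fv_fn.2 ⟨q.2, h2, h⟩)
            · exact ⟨q, by simp [h'], h⟩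
          have hsz : psize E'' < psize ((Tm.fn f ss, Tm.fn f ts) :: rest) := by
            have h1 : psize E'' = ((ss.zip ts).map (fun p => p.1.size + p.2.size)).sum
                + psize rest := by simp [psize, hE'']
            have h2 := zip_sum_le ss ts
            simp only [psize, List.map_cons, List.sum_cons, Tm.size_fn]
            simp only [psize] at h1
            omega
          obtain ⟨γ, hγ1, hγ2⟩ := IHn E'' (le_trans (Finset.card_le_card hvsub'') hk)
            (by omega) δ hδE''
          have hγmaps : ∀ δ', UE δ' E'' → ss.map (Tm.subst δ') = ts.map (Tm.subst δ') :=
            fun δ' hδ' => map_eq_of_zip hlen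
              (fun q hq => hδ' q (List.mem_append.2 (Or.inl hq)))
          refine ⟨γ, ?_, ?_⟩
          · intro q hq
            rcases List.mem_cons.1 hq with h' | h'
            · subst h'
              simp only [Tm.subst_fn, Tm.fn.injEq]
              exact ⟨trivial, hγmaps γ hγ1⟩
            · exact hγ1 q (List.mem_append.2 (Or.inr h'))
          · intro δ' hδ'
            refine hγ2 δ' ?_
            intro q hq
            rcases List.mem_append.1 hq with h' | h'
            · exact zip_forall_of_map_eq (by simpa using hδ' (Tm.fn f ss, Tm.fn f ts) (by simp)) q h'
            · exact hδ' q (by simp [h'])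
-- ### Atom-level lemmas
theorem Atom.subst_subst (θ γ : Subst) (A : Atom) :
    (A.subst γ).subst θ = A.subst (Subst.comp θ γ) := by
  simp [Atom.subst, List.map_map, Function.comp, Tm.subst_subst]

theorem Atom.mem_fv {v : ℕ} {A : Atom} : v ∈ A.fv ↔ ∃ t ∈ A.args, v ∈ t.fv := by
  rw [Atom.fv, mem_foldr_union]; simp

theorem Atom.subst_congr {σ σ' : Subst} {A : Atom} (h : ∀ v ∈ A.fv, σ v = σ' v) :
    A.subst σ = A.subst σ' := by
  simp only [Atom.subst, Atom.mk.injEq, true_and]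
  exact List.map_congr_left fun t ht =>
    Tm.subst_congr fun v hv => h v (Atom.mem_fv.2 ⟨t, ht, hv⟩)

theorem Atom.mem_fv_subst {σ : Subst} {v : ℕ} {A : Atom} (h : v ∈ (A.subst σ).fv) :
    ∃ u ∈ A.fv, v ∈ (σ u).fv := by
  rw [Atom.mem_fv] at h
  obtain ⟨t, ht, hv⟩ := h
  simp only [Atom.subst, List.mem_map] at ht
  obtain ⟨t₀, ht₀, rfl⟩ := ht
  obtain ⟨u, hu, hvu⟩ := Tm.mem_fv_subst hv
  exact ⟨u, Atom.mem_fv.2 ⟨t₀, ht₀, hu⟩, hvu⟩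

theorem Atom.ext_subst (A : Atom) (t : Tm) (σ : Subst) :
    (A.ext t).subst σ = (A.subst σ).ext (t.subst σ) := by
  simp [Atom.ext, Atom.subst]

theorem exists_mgu_atom {A B : Atom} {δ : Subst} (h : Unifies δ A B) :
    ∃ γ, Unifies γ A B ∧ ∀ δ', Unifies δ' A B → δ' = Subst.comp δ' γ := by
  have heq : A.subst δ = B.subst δ := h
  simp only [Atom.subst, Atom.mk.injEq] at heq
  obtain ⟨hpred, hmaps⟩ := heq
  have hlen : A.args.length = B.args.length := by simpa using congrArg List.length hmaps
  have hUE : UE δ (A.args.zip B.args) := zip_forall_of_map_eq hmaps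
  obtain ⟨γ, hγ1, hγ2⟩ := mgu_exists_aux (varsE (A.args.zip B.args)).card _ le_rfl δ hUE
  refine ⟨γ, ?_, fun δ' hδ' => hγ2 δ' (zip_forall_of_map_eq (congrArg Atom.args (hδ' : A.subst δ' = B.subst δ')))⟩
  show A.subst γ = B.subst γ
  simp only [Atom.subst, Atom.mk.injEq]
  exact ⟨hpred, map_eq_of_zip hlen hγ1⟩

theorem mem_listFV {v : ℕ} {l : List Atom} : v ∈ listFV l ↔ ∃ a ∈ l, v ∈ a.fv := by
  rw [listFV, mem_foldr_union]; simp

theorem mem_mFV {v : ℕ} {G : Multiset Atom} : v ∈ mFV G ↔ ∃ a ∈ G, v ∈ a.fv := by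
  rw [mFV]
  induction G using Multiset.induction with
  | empty => simp
  | cons a G ih => simp [Multiset.sup_cons, ih]

-- ### Term-matching solvability
inductive SolvM (Ψ : Prog) : Multiset Atom → Prop where
  | nil : SolvM Ψ 0
  | step {κ : ℕ} {body : List Atom} {head : Atom} {σ : Subst} {rest : Multiset Atom} :
      (κ, body, head) ∈ Ψ → SolvM Ψ (↑(body.map (Atom.subst σ)) + rest) →
      SolvM Ψ (head.subst σ ::ₘ rest)

inductive SolvA (Ψ : Prog) : Atom → Prop where
  | step {κ : ℕ} {body : List Atom} {head : Atom} {σ : Subst} :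
      (κ, body, head) ∈ Ψ → (∀ b ∈ body, SolvA Ψ (b.subst σ)) →
      SolvA Ψ (head.subst σ)

theorem SolvM.forall_solvA {Ψ : Prog} {G : Multiset Atom} (h : SolvM Ψ G) :
    ∀ a ∈ G, SolvA Ψ a := by
  induction h with
  | nil => simp
  | @step κ body head σ rest hmem _ ih =>
    intro a ha
    rcases Multiset.mem_cons.1 ha with rfl | ha
    · exact SolvA.step hmem fun b hb =>
        ih _ (Multiset.mem_add.2 (Or.inl (by simp; exact ⟨b, hb, rfl⟩)))
    · exact ih a (Multiset.mem_add.2 (Or.inr ha))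

theorem solv_append {Ψ : Prog} : ∀ (l : List Atom),
    (∀ b ∈ l, ∀ r, SolvM Ψ r → SolvM Ψ (b ::ₘ r)) →
    ∀ r, SolvM Ψ r → SolvM Ψ (↑l + r) := by
  intro l
  induction l with
  | nil => intro _ r hr; simpa using hr
  | cons a l ih =>
    intro h r hr
    have h1 := ih (fun b hb => h b (by simp [hb])) r hr
    have h2 := h a (by simp) _ h1
    have hcoe : ((a :: l : List Atom) : Multiset Atom) + r = a ::ₘ (↑l + r) := by
      rw [← Multiset.cons_coe, Multiset.cons_add]
    rwa [hcoe]

theorem SolvA.toCons {Ψ : Prog} {a : Atom} (h : SolvA Ψ a) :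
    ∀ rest, SolvM Ψ rest → SolvM Ψ (a ::ₘ rest) := by
  induction h with
  | @step κ body head σ hmem _ ih =>
    intro rest hrest
    refine SolvM.step hmem ?_
    refine solv_append _ ?_ rest hrest
    intro b hb r hr
    obtain ⟨b₀, hb₀, rfl⟩ := List.mem_map.1 hb
    exact ih b₀ hb₀ r hr

theorem SolvM.of_forall {Ψ : Prog} {G : Multiset Atom} (h : ∀ a ∈ G, SolvA Ψ a) :
    SolvM Ψ G := by
  induction G using Multiset.induction with
  | empty => exact SolvM.nil
  | cons a G ih =>
    exact (h a (by simp)).toCons G (ih fun b hb => h b (by simp [hb]))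

-- ### Soundness of LP-Unif w.r.t. solvability
def RG (Φ : Prog) (G G' : Multiset Atom) : Prop := ∃ κ γ, UnifStepL Φ κ γ G G'

theorem sound_step {Φ : Prog} {κ : ℕ} {γ : Subst} {G G' : Multiset Atom}
    (h : UnifStepL Φ κ γ G G') {δ : Subst} (h' : SolvM Φ (G'.map (Atom.subst δ))) :
    SolvM Φ (G.map (Atom.subst (Subst.comp δ γ))) := by
  obtain ⟨A, rest, body, head, rfl, hfresh, hmgu, rfl⟩ := h
  obtain ⟨body₀, head₀, ρ, hmem, -, rfl, rfl, -⟩ := hfresh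
  set ρ' : Subst := fun v => Tm.var (ρ v) with hρ'
  have hrn : ∀ B : Atom, B.rename ρ = B.subst ρ' := fun B => rfl
  set σstar : Subst := Subst.comp (Subst.comp δ γ) ρ' with hσstar
  have hmg : (Atom.rename ρ head₀).subst γ = A.subst γ := hmgu.1
  have hA : A.subst (Subst.comp δ γ) = head₀.subst σstar := by
    calc A.subst (Subst.comp δ γ) = (A.subst γ).subst δ := (Atom.subst_subst δ γ A).symm
      _ = ((head₀.rename ρ).subst γ).subst δ := by rw [hmg]
      _ = ((head₀.subst ρ').subst γ).subst δ := by rw [hrn]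
      _ = head₀.subst σstar := by
          rw [Atom.subst_subst, Atom.subst_subst, hσstar, Subst.comp_assoc]
  have hprem : (↑(body₀.map (Atom.rename ρ) |>.map (Atom.subst γ)) +
        rest.map (Atom.subst γ)).map (Atom.subst δ)
      = ↑(body₀.map (Atom.subst σstar)) + rest.map (Atom.subst (Subst.comp δ γ)) := by
    rw [Multiset.map_add, Multiset.map_coe, Multiset.map_map]
    congr 1
    · congr 1
      rw [List.map_map, List.map_map]
      refine List.map_congr_left fun b _ => ?_
      show ((b.rename ρ).subst γ).subst δ = b.subst σstar
      rw [hrn, Atom.subst_subst, Atom.subst_subst, hσstar, Subst.comp_assoc]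
    · refine Multiset.map_congr rfl fun r _ => ?_
      show (r.subst γ).subst δ = r.subst (Subst.comp δ γ)
      rw [Atom.subst_subst]
  rw [hprem] at h'
  rw [Multiset.map_cons, hA]
  exact SolvM.step hmem h'

theorem unif_to_solv {Φ : Prog} {q : Multiset Atom × Subst} (hq : q.1 = 0) :
    ∀ {p : Multiset Atom × Subst}, Relation.ReflTransGen (unifR Φ) p q →
    ∃ δ, SolvM Φ (p.1.map (Atom.subst δ)) := by
  intro p h
  induction h using Relation.ReflTransGen.head_induction_on with
  | refl => exact ⟨Subst.id, by rw [hq]; simpa using SolvM.nil⟩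
  | head hstep _ ih =>
    obtain ⟨κ, γ0, hstep, -⟩ := hstep
    obtain ⟨δ, hδ⟩ := ih
    exact ⟨Subst.comp δ γ0, sound_step hstep hδ⟩
-- ### Completeness of LP-Unif w.r.t. solvability
theorem solv_to_unif {Φ : Prog} : ∀ {S : Multiset Atom}, SolvM Φ S →
    ∀ (G : Multiset Atom) (δ : Subst), G.map (Atom.subst δ) = S →
    Relation.ReflTransGen (RG Φ) G 0 := by
  intro S h
  induction h with
  | nil =>
    intro G δ hG
    rw [Multiset.map_eq_zero] at hG
    exact hG ▸ Relation.ReflTransGen.refl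
  | @step κ body₀ head₀ σ₀ rest' hmem _ ih =>
    intro G δ hG
    classical
    obtain ⟨A, hAG, hAeq, hrest⟩ := (Multiset.map_eq_cons _ G _ _).2 hG
    set rest := G.erase A with hrdef
    have hGA : G = A ::ₘ rest := (Multiset.cons_erase hAG).symm
    set M : ℕ := (mFV G).sup id + 1 with hM
    have hltM : ∀ v ∈ mFV G, v < M := by
      intro v hv
      have h := Finset.le_sup (f := id) hv
      simp only [id_eq] at h
      omega
    set ρ : ℕ → ℕ := fun v => v + M with hρ
    set ρ' : Subst := fun v => Tm.var (v + M) with hρ'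
    set δ' : Subst := fun v => if v < M then δ v else σ₀ (v - M) with hδ'
    have hcompρ : Subst.comp δ' ρ' = σ₀ := by
      funext v
      simp only [Subst.comp, hρ', Tm.subst_var, hδ']
      rw [if_neg (by omega)]
      congr 1
      omega
    have hrn : ∀ B : Atom, (B.rename ρ).subst δ' = B.subst σ₀ := by
      intro B
      show (B.subst ρ').subst δ' = B.subst σ₀
      rw [Atom.subst_subst, hcompρ]
    have hmemG : ∀ B ∈ G, B.subst δ' = B.subst δ := by
      intro B hB
      refine Atom.subst_congr fun v hv => ?_
      have : v < M := hltM v (mem_mFV.2 ⟨B, hB, hv⟩)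
      simp [hδ', this]
    set body := body₀.map (Atom.rename ρ) with hbody
    set head := head₀.rename ρ with hhead
    have hfresh : FreshRuleFor Φ κ G body head := by
      refine ⟨body₀, head₀, ρ, hmem, fun a b hab => by simpa [hρ] using hab, rfl, rfl, ?_⟩
      rw [Finset.disjoint_left]
      intro v hv hvG
      have hge : M ≤ v := by
        rcases Finset.mem_union.1 hv with hv | hv
        · obtain ⟨a, ha, hva⟩ := mem_listFV.1 hv
          obtain ⟨a₀, -, rfl⟩ := List.mem_map.1 ha
          obtain ⟨u, -, hvu⟩ := Atom.mem_fv_subst (A := a₀) (σ := ρ') hva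
          simp only [hρ', Tm.fv_var, Finset.mem_singleton] at hvu
          omega
        · obtain ⟨u, -, hvu⟩ := Atom.mem_fv_subst (A := head₀) (σ := ρ') hv
          simp only [hρ', Tm.fv_var, Finset.mem_singleton] at hvu
          omega
      exact absurd (hltM v hvG) (by omega)
    have hunif : Unifies δ' head A := by
      show head.subst δ' = A.subst δ'
      rw [hhead, hrn, hmemG A hAG, hAeq]
    obtain ⟨γ, hγ1, hγ2⟩ := exists_mgu_atom hunif
    have hδ'γ : δ' = Subst.comp δ' γ := hγ2 δ' hunif
    set G' : Multiset Atom := ↑(body.map (Atom.subst γ)) + rest.map (Atom.subst γ) with hG'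
    have hstep : RG Φ G G' := by
      exact ⟨κ, γ, A, rest, body, head, hGA, hfresh, ⟨hγ1, fun d hd => ⟨d, hγ2 d hd⟩⟩, rfl⟩
    have hG'map : G'.map (Atom.subst δ') = ↑(body₀.map (Atom.subst σ₀)) + rest' := by
      rw [hG', Multiset.map_add, Multiset.map_coe, Multiset.map_map]
      congr 1
      · congr 1
        rw [hbody, List.map_map, List.map_map]
        refine List.map_congr_left fun b _ => ?_
        show ((b.rename ρ).subst γ).subst δ' = b.subst σ₀
        rw [Atom.subst_subst, ← hδ'γ, hrn]
      · rw [← hrest]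
        refine Multiset.map_congr rfl fun r hr => ?_
        show (r.subst γ).subst δ' = r.subst δ
        rw [Atom.subst_subst, ← hδ'γ, hmemG r (by rw [hGA]; exact Multiset.mem_cons_of_mem hr)]
    exact Relation.ReflTransGen.head hstep (ih G' δ' hG'map)

theorem rg_to_pairs {Φ : Prog} {G : Multiset Atom}
    (h : Relation.ReflTransGen (RG Φ) G 0) :
    ∀ s, ∃ γ, Relation.ReflTransGen (unifR Φ) (G, s) (0, γ) := by
  induction h using Relation.ReflTransGen.head_induction_on with
  | refl => exact fun s => ⟨s, Relation.ReflTransGen.refl⟩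
  | @head a c hstep _ ih =>
    intro s
    obtain ⟨κ, γ0, hstep⟩ := hstep
    obtain ⟨γ, hγ⟩ := ih (Subst.comp γ0 s)
    exact ⟨γ, Relation.ReflTransGen.head ⟨κ, γ0, hstep, rfl⟩ hγ⟩

theorem pairs_to_rg {Φ : Prog} {p q : Multiset Atom × Subst}
    (h : Relation.ReflTransGen (unifR Φ) p q) :
    Relation.ReflTransGen (RG Φ) p.1 q.1 := by
  induction h with
  | refl => exact Relation.ReflTransGen.refl
  | tail _ hstep ih =>
    obtain ⟨κ, γ, h1, -⟩ := hstep
    exact ih.tail ⟨κ, γ, h1⟩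

theorem unifSucc_iff_solvA (Ψ : Prog) (B : Atom) :
    UnifSucc Ψ {B} ↔ ∃ δ, SolvA Ψ (B.subst δ) := by
  constructor
  · rintro ⟨γ, h⟩
    obtain ⟨δ, hδ⟩ := unif_to_solv (q := (0, γ)) rfl h
    refine ⟨δ, ?_⟩
    have := hδ
    rw [Multiset.map_singleton] at this
    exact this.forall_solvA _ (Multiset.mem_singleton_self _)
  · rintro ⟨δ, h⟩
    have hM : SolvM Ψ (({B} : Multiset Atom).map (Atom.subst δ)) := by
      rw [Multiset.map_singleton]
      simpa using h.toCons 0 SolvM.nil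
    have hrg := solv_to_unif hM {B} δ rfl
    obtain ⟨γ, hγ⟩ := rg_to_pairs hrg Subst.id
    exact ⟨γ, hγ⟩
-- ### The realizability transformation preserves solvability
theorem list_skolem {α β : Type*} (l : List α) (P : α → β → Prop)
    (h : ∀ a ∈ l, ∃ b, P a b) (d : β) :
    ∃ bs : List β, bs.length = l.length ∧
      ∀ i (hi : i < l.length), P l[i] (bs.getD i d) := by
  induction l with
  | nil => exact ⟨[], rfl, fun i hi => by simp at hi⟩
  | cons a l ih =>
    obtain ⟨b, hb⟩ := h a (by simp)
    obtain ⟨bs, hlen, hbs⟩ := ih (fun a ha => h a (by simp [ha]))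
    refine ⟨b :: bs, by simp [hlen], fun i hi => ?_⟩
    cases i with
    | zero => simpa using hb
    | succ i => simpa using hbs i (by simpa using hi)

theorem ruleFV_lt {body : List Atom} {head : Atom} {v : ℕ}
    (hv : v ∈ ruleFV body head) : v < (ruleFV body head).sup id + 1 := by
  have h := Finset.le_sup (f := id) hv
  simp only [id_eq] at h
  omega

theorem solvA_trans_fwd {fsym : ℕ → ℕ} {Φ : Prog} {B : Atom} (h : SolvA Φ B) :
    ∃ t, SolvA (transProg fsym Φ) (B.ext t) := by
  induction h with
  | @step κ body head σ hmem _ ih =>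
    obtain ⟨ts, hlen, hts⟩ := list_skolem body
      (fun a t => SolvA (transProg fsym Φ) ((a.subst σ).ext t)) ih (Tm.var 0)
    set N : ℕ := (ruleFV body head).sup id + 1 with hN
    set len := body.length with hlendef
    set ys : List ℕ := (List.range len).map (fun i => N + i) with hys
    set σ' : Subst := fun v => if v < N then σ v else ts.getD (v - N) (Tm.var 0) with hσ'
    have hagree : ∀ A : Atom, A.fv ⊆ ruleFV body head → A.subst σ' = A.subst σ := by
      intro A hA
      refine Atom.subst_congr fun v hv => ?_
      have : v < N := ruleFV_lt (hA hv)
      simp [hσ', this]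
    have hyslen : ys.length = len := by simp [hys]
    have hysmap : ys.map σ' = ts := by
      refine List.ext_getElem (by simp only [List.length_map]; omega) ?_
      intro i hi hi'
      have hilen : i < len := by rw [List.length_map, hyslen] at hi; exact hi
      simp only [hys, List.getElem_map, List.getElem_range]
      rw [hσ']
      simp only [if_neg (by omega : ¬ N + i < N)]
      rw [List.getD_eq_getElem ts (Tm.var 0) (by omega)]
      congr 1
      omega
    have hmem' : (κ, extBody body ys, head.ext (.fn (fsym κ) (ys.map Tm.var)))
        ∈ transProg fsym Φ := by
      refine List.mem_map.2 ⟨(κ, body, head), hmem, ?_⟩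
      simp [transRule, hys, hN, hlendef, List.map_map]
    refine ⟨Tm.fn (fsym κ) ts, ?_⟩
    have hsolv := SolvA.step (σ := σ') hmem' ?_
    · have heq : (head.ext (.fn (fsym κ) (ys.map Tm.var))).subst σ'
          = (head.subst σ).ext (Tm.fn (fsym κ) ts) := by
        rw [Atom.ext_subst, hagree head (by simp [ruleFV])]
        congr 1
        rw [Tm.subst_fn, List.map_map]
        congr 1
        rw [show Tm.subst σ' ∘ Tm.var = σ' from funext fun v => Tm.subst_var σ' v]
        exact hysmap
      rwa [heq] at hsolv
    · intro b hb
      obtain ⟨i, hi, rfl⟩ := List.mem_iff_getElem.1 hb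
      have hilen : i < len := by
        simp only [extBody, List.length_zipWith, hyslen] at hi
        omega
      have hget : (extBody body ys)[i] = body[i].ext (Tm.var (ys[i]'(by omega))) := by
        simp [extBody, List.getElem_zipWith]
      rw [hget, Atom.ext_subst, Tm.subst_var]
      have hysget : ys[i]'(by omega) = N + i := by simp [hys]
      have hbfv : (body[i]'hilen).subst σ' = (body[i]'hilen).subst σ := by
        refine hagree _ ?_
        intro v hv
        exact Finset.mem_union.2 (Or.inl (mem_listFV.2 ⟨body[i], List.getElem_mem _, hv⟩))
      rw [hbfv, hysget, hσ']
      simp only [if_neg (by omega : ¬ N + i < N)]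
      have : N + i - N = i := by omega
      rw [this]
      exact hts i hilen

theorem solvA_trans_bwd {fsym : ℕ → ℕ} {Φ : Prog} : ∀ {B' : Atom},
    SolvA (transProg fsym Φ) B' → ∀ B t, B' = B.ext t → SolvA Φ B := by
  intro B' h
  induction h with
  | @step κ' body' head' σ hmem _ ih =>
    intro B t hBt
    obtain ⟨r, hr, heq⟩ := List.mem_map.1 hmem
    obtain ⟨κ, body, head⟩ := r
    simp only [transRule, Prod.mk.injEq] at heq
    obtain ⟨hκ, hbody', hhead'⟩ := heq
    set N : ℕ := (ruleFV body head).sup id + 1 with hN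
    set ys : List ℕ := (List.range body.length).map (fun i => N + i) with hys
    have hyslen : ys.length = body.length := by simp [hys]
    -- identify B with head.subst σ
    have hhs : head'.subst σ = (head.subst σ).ext
        ((Tm.fn (fsym κ) (ys.map Tm.var)).subst σ) := by
      rw [← hhead', Atom.ext_subst]
    rw [hBt] at hhs
    simp only [Atom.ext, Atom.mk.injEq] at hhs
    obtain ⟨hpred, hargs⟩ := hhs
    have hlen : B.args.length = (head.subst σ).args.length := by
      have := congrArg List.length hargs
      simp at this
      omega
    obtain ⟨hargs1, -⟩ := List.append_inj hargs (by omega)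
    have hB : B = head.subst σ := by
      cases B
      cases hargs1
      cases hpred
      rfl
    rw [hB]
    refine SolvA.step (σ := σ) hr ?_
    intro a ha
    obtain ⟨i, hi, rfl⟩ := List.mem_iff_getElem.1 ha
    have hlext : i < (extBody body ys).length := by
      simp [extBody, List.length_zipWith, hyslen]
      omega
    have hget : (extBody body ys)[i] = body[i].ext (Tm.var (ys[i]'(by rw [hyslen]; omega))) := by
      simp [extBody, List.getElem_zipWith]
    refine ih ((extBody body ys)[i]) ?_ (body[i].subst σ)
      (Tm.var (ys[i]'(by rw [hyslen]; omega)) |>.subst σ) ?_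
    · rw [← hbody']
      exact List.getElem_mem _
    · rw [hget, Atom.ext_subst]

-- ### Main theorem assembly helper
theorem realizability_main {fsym : ℕ → ℕ} {Φ : Prog} {A : Atom} {y : ℕ} (hy : y ∉ A.fv) :
    UnifSucc Φ {A} ↔ UnifSucc (transProg fsym Φ) {A.ext (Tm.var y)} := by
  rw [unifSucc_iff_solvA, unifSucc_iff_solvA]
  constructor
  · rintro ⟨δ, h⟩
    obtain ⟨t, ht⟩ := solvA_trans_fwd (fsym := fsym) h
    refine ⟨fun v => if v = y then t else δ v, ?_⟩
    rw [Atom.ext_subst, Tm.subst_var, if_pos rfl]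
    have hAδ : A.subst (fun v => if v = y then t else δ v) = A.subst δ := by
      refine Atom.subst_congr fun v hv => ?_
      have : v ≠ y := fun h' => hy (h' ▸ hv)
      simp [this]
    rw [hAδ]
    exact ht
  · rintro ⟨δ, h⟩
    rw [Atom.ext_subst] at h
    exact ⟨δ, solvA_trans_bwd h _ _ rfl⟩

/-- Realizability preserves LP-Unif success for queries: for a fresh
variable `y`, `Φ ⊢ {A} ⇝* ∅` iff `F(Φ) ⊢ {A[y]} ⇝* ∅`. -/
theorem realizability_preserves_unif (fsym : ℕ → ℕ) (Φ : Prog)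
    (hf : FreshSyms fsym Φ) (A : Atom) (y : ℕ) (hy : y ∉ A.fv) :
    UnifSucc Φ {A} ↔ UnifSucc (transProg fsym Φ) {A.ext (Tm.var y)} := by
  exact realizability_main hy

end SRes
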